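/- Let 0 < λ < Λ and C > 0, and define on the unit ball B₁ ⊂ ℝ² the functions u(x,y) = x² − y² + C·(max(x,0))³ and v(x,y) = x² − y². Then u and v are C² on B₁, u ≥ v on B₁, and for every (x,y) ∈ B₁ the Hessians satisfy M⁺(D²u(x,y)) = 2(Λ − λ) + 6CΛ·max(x,0) and M⁻(D²v(x,y)) = −2(Λ − λ). In particular (u,v) solves the two membranes problem in B₁ with F = M⁺, G = M⁻, f(x,y) = 2(Λ − λ) + 6CΛ·max(x,0) and g ≡ −2(Λ − λ). -/

import Mathlib

open Metric Set Matrix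

noncomputable section

/-- Euclidean space `ℝⁿ`. -/
abbrev EucSp (n : ℕ) := EuclideanSpace ℝ (Fin n)

/-- The class `L_{λ,Λ}` of symmetric matrices whose eigenvalues lie between `lam` and `Lam`,
i.e. `lam • I ≤ A ≤ Lam • I`. -/
def PucciClass (n : ℕ) (lam Lam : ℝ) : Set (Matrix (Fin n) (Fin n) ℝ) :=
  {A | A.IsSymm ∧ (A - lam • (1 : Matrix (Fin n) (Fin n) ℝ)).PosSemidef ∧
    (Lam • (1 : Matrix (Fin n) (Fin n) ℝ) - A).PosSemidef}

/-- The Pucci maximal operator `M⁺(X) = sup_{A ∈ L_{λ,Λ}} tr (A X)`. -/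
def PucciSup (n : ℕ) (lam Lam : ℝ) (X : Matrix (Fin n) (Fin n) ℝ) : ℝ :=
  sSup ((fun A => (A * X).trace) '' PucciClass n lam Lam)

/-- The Pucci minimal operator `M⁻(X) = inf_{A ∈ L_{λ,Λ}} tr (A X)`. -/
def PucciInf (n : ℕ) (lam Lam : ℝ) (X : Matrix (Fin n) (Fin n) ℝ) : ℝ :=
  sInf ((fun A => (A * X).trace) '' PucciClass n lam Lam)

/-- The Hessian matrix `D²φ(x)` of `φ : ℝⁿ → ℝ`. -/
def Hess (n : ℕ) (φ : EucSp n → ℝ) (x : EucSp n) : Matrix (Fin n) (Fin n) ℝ :=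
  Matrix.of fun i j =>
    fderiv ℝ (fun y => fderiv ℝ φ y (EuclideanSpace.single j 1)) x (EuclideanSpace.single i 1)

/-- `F(D²u) ≤ f` in `U` in the viscosity sense: whenever a `C²` function `φ` touches `u` from
below at `x₀ ∈ U`, then `F(D²φ(x₀)) ≤ f(x₀)`. -/
def ViscLE (n : ℕ) (F : Matrix (Fin n) (Fin n) ℝ → ℝ) (u f : EucSp n → ℝ)
    (U : Set (EucSp n)) : Prop :=
  ∀ φ : EucSp n → ℝ, ContDiff ℝ 2 φ → ∀ x₀ ∈ U, (∀ x ∈ U, φ x ≤ u x) → φ x₀ = u x₀ →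
    F (Hess n φ x₀) ≤ f x₀

/-- `F(D²u) ≥ f` in `U` in the viscosity sense: whenever a `C²` function `φ` touches `u` from
above at `x₀ ∈ U`, then `F(D²φ(x₀)) ≥ f(x₀)`. -/
def ViscGE (n : ℕ) (F : Matrix (Fin n) (Fin n) ℝ → ℝ) (u f : EucSp n → ℝ)
    (U : Set (EucSp n)) : Prop :=
  ∀ φ : EucSp n → ℝ, ContDiff ℝ 2 φ → ∀ x₀ ∈ U, (∀ x ∈ U, u x ≤ φ x) → φ x₀ = u x₀ →
    f x₀ ≤ F (Hess n φ x₀)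

/-- `u` is a viscosity solution of `F(D²u) = f` in `U`. -/
def ViscEq (n : ℕ) (F : Matrix (Fin n) (Fin n) ℝ → ℝ) (u f : EucSp n → ℝ)
    (U : Set (EucSp n)) : Prop :=
  ViscLE n F u f U ∧ ViscGE n F u f U

/-- `F` is uniformly elliptic with respect to the class `L_{λ,Λ}`. -/
def UniformlyElliptic (n : ℕ) (lam Lam : ℝ) (F : Matrix (Fin n) (Fin n) ℝ → ℝ) : Prop :=
  ∀ X Y : Matrix (Fin n) (Fin n) ℝ, X.IsSymm → Y.IsSymm →
    PucciInf n lam Lam (X - Y) ≤ F X - F Y ∧ F X - F Y ≤ PucciSup n lam Lam (X - Y)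

/-- `‖w‖_{C^γ(S)} ≤ K`: `w` is bounded by `K` and `γ`-Hölder with constant `K` on `S`. -/
def HolderBnd (n : ℕ) (γ K : ℝ) (S : Set (EucSp n)) (w : EucSp n → ℝ) : Prop :=
  (∀ x ∈ S, |w x| ≤ K) ∧ ∀ x ∈ S, ∀ y ∈ S, |w x - w y| ≤ K * ‖x - y‖ ^ γ

/-- The pair `(u, v)` solves the two membranes problem for `(F, G, f, g, u₀, v₀)` in the
viscosity sense. -/
def SolvesTwoMembranes (n : ℕ) (F G : Matrix (Fin n) (Fin n) ℝ → ℝ)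
    (f g u₀ v₀ u v : EucSp n → ℝ) : Prop :=
  ContinuousOn u (closedBall 0 1) ∧ ContinuousOn v (closedBall 0 1) ∧
  (∀ x ∈ ball (0 : EucSp n) 1, v x ≤ u x) ∧
  ViscLE n F u f (ball 0 1) ∧
  ViscGE n G v g (ball 0 1) ∧
  ViscEq n F u f ({x | v x < u x} ∩ ball 0 1) ∧
  ViscEq n G v g ({x | v x < u x} ∩ ball 0 1) ∧
  (∀ x ∈ sphere (0 : EucSp n) 1, u x = u₀ x ∧ v x = v₀ x)

/-- The `L^∞` norm of `f` on `S` (as a `sSup`). -/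
def supAbs (n : ℕ) (S : Set (EucSp n)) (f : EucSp n → ℝ) : ℝ :=
  sSup ((fun x => |f x|) '' S)


lemma hasDerivAt_g (t : ℝ) : HasDerivAt (fun s : ℝ => s * max s 0) (2 * max t 0) t := by
  rcases lt_trichotomy t 0 with h | h | h
  · have hev : (fun s : ℝ => s * max s 0) =ᶠ[nhds t] fun _ => (0:ℝ) := by
      filter_upwards [Iio_mem_nhds h] with s hs
      simp [max_eq_right (le_of_lt (mem_Iio.mp hs))]
    have h0 : HasDerivAt (fun _ : ℝ => (0:ℝ)) 0 t := hasDerivAt_const t 0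
    rw [max_eq_right h.le, mul_zero]
    exact h0.congr_of_eventuallyEq hev
  · subst h
    rw [max_self, mul_zero]
    rw [hasDerivAt_iff_tendsto_slope]
    have hs : slope (fun s : ℝ => s * max s 0) 0 =ᶠ[nhdsWithin 0 {(0:ℝ)}ᶜ] fun s => max s 0 := by
      filter_upwards [self_mem_nhdsWithin] with s hs
      have : s ≠ 0 := hs
      simp only [slope_def_field, zero_mul, sub_zero]
      exact mul_div_cancel_left₀ _ this
    rw [Filter.tendsto_congr' hs]
    have hc : Continuous (fun s : ℝ => max s 0) := continuous_id.max continuous_const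
    simpa using (hc.tendsto 0).mono_left nhdsWithin_le_nhds
  · have hev : (fun s : ℝ => s * max s 0) =ᶠ[nhds t] fun s => s * s := by
      filter_upwards [Ioi_mem_nhds h] with s hs
      simp [max_eq_left (le_of_lt (mem_Ioi.mp hs))]
    have h1 : HasDerivAt (fun s : ℝ => s * s) (1 * t + t * 1) t :=
      (hasDerivAt_id t).mul (hasDerivAt_id t)
    rw [max_eq_left h.le]
    have h2 : (1 : ℝ) * t + t * 1 = 2 * t := by ring
    rw [h2] at h1
    exact h1.congr_of_eventuallyEq hev

lemma cube_eq (s : ℝ) : max s 0 ^ 3 = s * (s * max s 0) := by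
  rcases le_total s 0 with h | h
  · simp [max_eq_right h]
  · simp [max_eq_left h]; ring

lemma hasDerivAt_h (t : ℝ) : HasDerivAt (fun s : ℝ => max s 0 ^ 3) (3 * max t 0 ^ 2) t := by
  have h1 : HasDerivAt (fun s : ℝ => s * (s * max s 0)) (1 * (t * max t 0) + t * (2 * max t 0)) t :=
    (hasDerivAt_id t).mul (hasDerivAt_g t)
  simp only [funext cube_eq]
  convert h1 using 1
  rcases le_total t 0 with h | h
  · simp [max_eq_right h]
  · simp [max_eq_left h]; ring

lemma contDiff_h : ContDiff ℝ 2 (fun s : ℝ => max s 0 ^ 3) := by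
  have hd3 : deriv (fun s : ℝ => max s 0 ^ 3) = fun t => 3 * max t 0 ^ 2 :=
    funext fun t => (hasDerivAt_h t).deriv
  have hsq : (fun t : ℝ => 3 * max t 0 ^ 2) = fun t => 3 * (t * max t 0) := by
    funext t; rcases le_total t 0 with h | h
    · simp [max_eq_right h]
    · simp [max_eq_left h]; ring
  rw [show (2 : WithTop ℕ∞) = 1 + 1 from rfl, contDiff_succ_iff_deriv]
  refine ⟨fun t => (hasDerivAt_h t).differentiableAt, by simp, ?_⟩
  rw [hd3, hsq]
  rw [show (1 : WithTop ℕ∞) = 0 + 1 from rfl, contDiff_succ_iff_deriv]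
  refine ⟨fun t => ((hasDerivAt_g t).const_mul 3).differentiableAt, by simp, ?_⟩
  have hdd : deriv (fun t : ℝ => 3 * (t * max t 0)) = fun t => 3 * (2 * max t 0) :=
    funext fun t => ((hasDerivAt_g t).const_mul 3).deriv
  rw [hdd, contDiff_zero]
  fun_prop


lemma trace_mul_diag (A : Matrix (Fin 2) (Fin 2) ℝ) (a b : ℝ) :
    (A * Matrix.of ![![a,0],![0,-b]]).trace = a * A 0 0 - b * A 1 1 := by
  simp [Matrix.trace_fin_two, Matrix.mul_apply, Fin.sum_univ_two]
  ring

lemma diag_bounds {n : ℕ} {lam Lam : ℝ} {A : Matrix (Fin n) (Fin n) ℝ}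
    (hA : A ∈ PucciClass n lam Lam) (i : Fin n) : lam ≤ A i i ∧ A i i ≤ Lam := by
  obtain ⟨-, h1, h2⟩ := hA
  constructor
  · have := h1.diag_nonneg (i := i)
    simpa [Matrix.sub_apply, Matrix.one_apply, dotProduct, Matrix.mulVec, Pi.single_apply,
      Finset.sum_ite_eq', sub_nonneg] using this
  · have := h2.diag_nonneg (i := i)
    simpa [Matrix.sub_apply, Matrix.one_apply, dotProduct, Matrix.mulVec, Pi.single_apply,
      Finset.sum_ite_eq', sub_nonneg] using this

lemma diag_mem {lam Lam c d : ℝ} (h1 : lam ≤ c) (h2 : c ≤ Lam) (h3 : lam ≤ d) (h4 : d ≤ Lam) :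
    Matrix.diagonal ![c, d] ∈ PucciClass 2 lam Lam := by
  refine ⟨Matrix.isSymm_diagonal _, ?_, ?_⟩
  · have : Matrix.diagonal ![c, d] - lam • (1 : Matrix (Fin 2) (Fin 2) ℝ)
        = Matrix.diagonal ![c - lam, d - lam] := by
      ext i j
      fin_cases i <;> fin_cases j <;>
        simp [Matrix.sub_apply, Matrix.smul_apply, Matrix.one_apply, Matrix.diagonal_apply]
    rw [this]
    refine Matrix.posSemidef_diagonal_iff.mpr fun i => ?_
    fin_cases i <;> simp [sub_nonneg, h1, h3]
  · have : Lam • (1 : Matrix (Fin 2) (Fin 2) ℝ) - Matrix.diagonal ![c, d]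
        = Matrix.diagonal ![Lam - c, Lam - d] := by
      ext i j
      fin_cases i <;> fin_cases j <;>
        simp [Matrix.sub_apply, Matrix.smul_apply, Matrix.one_apply, Matrix.diagonal_apply]
    rw [this]
    refine Matrix.posSemidef_diagonal_iff.mpr fun i => ?_
    fin_cases i <;> simp [sub_nonneg, h2, h4]

lemma pucciSup_diag {lam Lam : ℝ} (hlam : 0 < lam) (hL : lam ≤ Lam) {a b : ℝ}
    (ha : 0 ≤ a) (hb : 0 ≤ b) :
    PucciSup 2 lam Lam (Matrix.of ![![a,0],![0,-b]]) = Lam * a - lam * b := by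
  apply IsGreatest.csSup_eq
  constructor
  · refine ⟨Matrix.diagonal ![Lam, lam], diag_mem hL le_rfl le_rfl hL, ?_⟩
    simp only []
    rw [trace_mul_diag]
    simp [Matrix.diagonal_apply]; ring
  · rintro x ⟨A, hA, rfl⟩
    simp only []
    rw [trace_mul_diag]
    have h0 := diag_bounds hA 0
    have h1 := diag_bounds hA 1
    have : a * A 0 0 ≤ a * Lam := mul_le_mul_of_nonneg_left h0.2 ha
    have : b * lam ≤ b * A 1 1 := mul_le_mul_of_nonneg_left h1.1 hb
    nlinarith

lemma pucciInf_diag {lam Lam : ℝ} (hlam : 0 < lam) (hL : lam ≤ Lam) {a b : ℝ}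
    (ha : 0 ≤ a) (hb : 0 ≤ b) :
    PucciInf 2 lam Lam (Matrix.of ![![a,0],![0,-b]]) = lam * a - Lam * b := by
  apply IsLeast.csInf_eq
  constructor
  · refine ⟨Matrix.diagonal ![lam, Lam], diag_mem le_rfl hL hL le_rfl, ?_⟩
    simp only []
    rw [trace_mul_diag]
    simp [Matrix.diagonal_apply]; ring
  · rintro x ⟨A, hA, rfl⟩
    simp only []
    rw [trace_mul_diag]
    have h0 := diag_bounds hA 0
    have h1 := diag_bounds hA 1
    nlinarith



lemma hasFDerivAt_proj (i : Fin 2) (y : EucSp 2) :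
    HasFDerivAt (fun p : EucSp 2 => p i) (EuclideanSpace.proj i : EucSp 2 →L[ℝ] ℝ) y :=
  (EuclideanSpace.proj i : EucSp 2 →L[ℝ] ℝ).hasFDerivAt

lemma proj_single (i j : Fin 2) :
    (EuclideanSpace.proj i : EucSp 2 →L[ℝ] ℝ) (EuclideanSpace.single j 1)
      = if j = i then 1 else 0 := by
  simp [EuclideanSpace.single_apply, eq_comm]

section HessU
variable (C : ℝ)

lemma hasFDerivAt_u (y : EucSp 2) :
    HasFDerivAt (fun p : EucSp 2 => (p 0) ^ 2 - (p 1) ^ 2 + C * max (p 0) 0 ^ 3)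
      ((2 * y 0 + C * (3 * max (y 0) 0 ^ 2)) • (EuclideanSpace.proj 0 : EucSp 2 →L[ℝ] ℝ)
        + (-(2 * y 1)) • (EuclideanSpace.proj 1 : EucSp 2 →L[ℝ] ℝ)) y := by
  have h0 := hasFDerivAt_proj 0 y
  have h1 := hasFDerivAt_proj 1 y
  have h0sq : HasFDerivAt (fun p : EucSp 2 => (p 0) ^ 2)
      ((2 * y 0) • (EuclideanSpace.proj 0 : EucSp 2 →L[ℝ] ℝ)) y := by
    have := (hasDerivAt_pow 2 (y 0)).comp_hasFDerivAt y h0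
    norm_num at this
    exact this
  have h1sq : HasFDerivAt (fun p : EucSp 2 => (p 1) ^ 2)
      ((2 * y 1) • (EuclideanSpace.proj 1 : EucSp 2 →L[ℝ] ℝ)) y := by
    have := (hasDerivAt_pow 2 (y 1)).comp_hasFDerivAt y h1
    norm_num at this
    exact this
  have hcube : HasFDerivAt (fun p : EucSp 2 => max (p 0) 0 ^ 3)
      ((3 * max (y 0) 0 ^ 2) • (EuclideanSpace.proj 0 : EucSp 2 →L[ℝ] ℝ)) y :=
    (hasDerivAt_h (y 0)).comp_hasFDerivAt (f := fun p : EucSp 2 => p 0) y h0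
  have hsum := (h0sq.sub h1sq).add (hcube.const_mul C)
  refine hsum.congr_fderiv ?_
  ext p
  simp only [ContinuousLinearMap.add_apply, ContinuousLinearMap.sub_apply,
    ContinuousLinearMap.smul_apply, smul_eq_mul]
  ring

lemma fderiv_u_col0 (x : EucSp 2) :
    (fun y : EucSp 2 =>
      fderiv ℝ (fun p : EucSp 2 => (p 0) ^ 2 - (p 1) ^ 2 + C * max (p 0) 0 ^ 3) y
        (EuclideanSpace.single 0 1))
      = fun y : EucSp 2 => 2 * y 0 + C * (3 * max (y 0) 0 ^ 2) := by
  funext y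
  rw [(hasFDerivAt_u C y).fderiv]
  simp [ContinuousLinearMap.add_apply, ContinuousLinearMap.smul_apply, proj_single]

lemma fderiv_u_col1 (x : EucSp 2) :
    (fun y : EucSp 2 =>
      fderiv ℝ (fun p : EucSp 2 => (p 0) ^ 2 - (p 1) ^ 2 + C * max (p 0) 0 ^ 3) y
        (EuclideanSpace.single 1 1))
      = fun y : EucSp 2 => -(2 * y 1) := by
  funext y
  rw [(hasFDerivAt_u C y).fderiv]
  simp [ContinuousLinearMap.add_apply, ContinuousLinearMap.smul_apply, proj_single]

lemma hess_u (x : EucSp 2) :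
    Hess 2 (fun p : EucSp 2 => (p 0) ^ 2 - (p 1) ^ 2 + C * max (p 0) 0 ^ 3) x
      = Matrix.of ![![2 + 6 * C * max (x 0) 0, 0], ![0, -2]] := by
  have hcol0 : HasFDerivAt (fun y : EucSp 2 => 2 * y 0 + C * (3 * max (y 0) 0 ^ 2))
      ((2 + C * (3 * (2 * max (x 0) 0))) • (EuclideanSpace.proj 0 : EucSp 2 →L[ℝ] ℝ)) x := by
    have hscal : HasDerivAt (fun t : ℝ => 2 * t + C * (3 * max t 0 ^ 2))
        (2 + C * (3 * (2 * max (x 0) 0))) (x 0) := by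
      have e : (fun t : ℝ => 2 * t + C * (3 * max t 0 ^ 2))
          = fun t : ℝ => 2 * t + C * (3 * (t * max t 0)) := by
        funext t; rcases le_total t 0 with h | h
        · rw [max_eq_right h]; ring
        · rw [max_eq_left h]; ring
      rw [e]
      have := ((hasDerivAt_id (x 0)).const_mul 2).add
        (((hasDerivAt_g (x 0)).const_mul 3).const_mul C)
      simp only [id_eq, mul_one] at this
      exact this
    exact hscal.comp_hasFDerivAt x (hasFDerivAt_proj 0 x)
  have hcol1 : HasFDerivAt (fun y : EucSp 2 => -(2 * y 1))
      ((-2 : ℝ) • (EuclideanSpace.proj 1 : EucSp 2 →L[ℝ] ℝ)) x := by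
    have hscal : HasDerivAt (fun t : ℝ => -(2 * t)) (-2) (x 1) := by
      have := ((hasDerivAt_id (x 1)).const_mul 2).neg
      simp only [id_eq, mul_one] at this
      exact this
    exact hscal.comp_hasFDerivAt (f := fun p : EucSp 2 => p 1) x (hasFDerivAt_proj 1 x)
  ext i j
  fin_cases i <;> fin_cases j
  · show fderiv ℝ (fun y : EucSp 2 => fderiv ℝ (fun p : EucSp 2 => (p 0) ^ 2 - (p 1) ^ 2 + C * max (p 0) 0 ^ 3) y (EuclideanSpace.single 0 1)) x (EuclideanSpace.single 0 1) = 2 + 6 * C * max (x 0) 0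
    rw [fderiv_u_col0 C x, hcol0.fderiv]
    simp [ContinuousLinearMap.smul_apply, proj_single]
    ring
  · show fderiv ℝ (fun y : EucSp 2 => fderiv ℝ (fun p : EucSp 2 => (p 0) ^ 2 - (p 1) ^ 2 + C * max (p 0) 0 ^ 3) y (EuclideanSpace.single 1 1)) x (EuclideanSpace.single 0 1) = 0
    rw [fderiv_u_col1 C x, hcol1.fderiv]
    simp [ContinuousLinearMap.smul_apply, proj_single]
  · show fderiv ℝ (fun y : EucSp 2 => fderiv ℝ (fun p : EucSp 2 => (p 0) ^ 2 - (p 1) ^ 2 + C * max (p 0) 0 ^ 3) y (EuclideanSpace.single 0 1)) x (EuclideanSpace.single 1 1) = 0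
    rw [fderiv_u_col0 C x, hcol0.fderiv]
    simp [ContinuousLinearMap.smul_apply, proj_single]
  · show fderiv ℝ (fun y : EucSp 2 => fderiv ℝ (fun p : EucSp 2 => (p 0) ^ 2 - (p 1) ^ 2 + C * max (p 0) 0 ^ 3) y (EuclideanSpace.single 1 1)) x (EuclideanSpace.single 1 1) = -2
    rw [fderiv_u_col1 C x, hcol1.fderiv]
    simp [ContinuousLinearMap.smul_apply, proj_single]

end HessU

lemma hess_v (x : EucSp 2) :
    Hess 2 (fun p : EucSp 2 => (p 0) ^ 2 - (p 1) ^ 2) x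
      = Matrix.of ![![2, 0], ![0, -2]] := by
  have h := hess_u 0 x
  simp only [zero_mul, mul_zero, add_zero] at h
  exact h


/-- **Failure of non-degeneracy: the explicit example.** On `B₁ ⊂ ℝ²`, the functions
`u(x,y) = x² − y² + C (x₊)³` and `v(x,y) = x² − y²` are `C²`, satisfy `u ≥ v`, their Hessians
satisfy `M⁺(D²u) = 2(Λ − λ) + 6CΛ x₊` and `M⁻(D²v) = −2(Λ − λ)` at every point of `B₁`, and in
particular `(u, v)` solves the two membranes problem in `B₁` with `F = M⁺`, `G = M⁻`,
`f(x,y) = 2(Λ − λ) + 6CΛ x₊` and `g ≡ −2(Λ − λ)` (in the classical pointwise sense). -/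
theorem two_membranes_example_2d
    (lam Lam C : ℝ) (hlam : 0 < lam) (hLam : lam < Lam) (hC : 0 < C) :
    let u : EucSp 2 → ℝ := fun p => (p 0) ^ 2 - (p 1) ^ 2 + C * (max (p 0) 0) ^ 3
    let v : EucSp 2 → ℝ := fun p => (p 0) ^ 2 - (p 1) ^ 2
    let f : EucSp 2 → ℝ := fun p => 2 * (Lam - lam) + 6 * C * Lam * max (p 0) 0
    let g : EucSp 2 → ℝ := fun _ => -(2 * (Lam - lam))
    ContDiffOn ℝ 2 u (ball 0 1) ∧ ContDiffOn ℝ 2 v (ball 0 1) ∧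
    (∀ p ∈ ball (0 : EucSp 2) 1, v p ≤ u p) ∧
    (∀ p ∈ ball (0 : EucSp 2) 1, PucciSup 2 lam Lam (Hess 2 u p) = f p) ∧
    (∀ p ∈ ball (0 : EucSp 2) 1, PucciInf 2 lam Lam (Hess 2 v p) = g p) ∧
    (∀ p ∈ ball (0 : EucSp 2) 1, PucciSup 2 lam Lam (Hess 2 u p) ≤ f p) ∧
    (∀ p ∈ ball (0 : EucSp 2) 1, g p ≤ PucciInf 2 lam Lam (Hess 2 v p)) ∧
    (∀ p ∈ {q : EucSp 2 | v q < u q} ∩ ball 0 1,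
      PucciSup 2 lam Lam (Hess 2 u p) = f p ∧ PucciInf 2 lam Lam (Hess 2 v p) = g p) := by
  intro u v f g
  have hp0 : ContDiff ℝ 2 (fun p : EucSp 2 => p 0) :=
    (EuclideanSpace.proj (0 : Fin 2) : EucSp 2 →L[ℝ] ℝ).contDiff
  have hp1 : ContDiff ℝ 2 (fun p : EucSp 2 => p 1) :=
    (EuclideanSpace.proj (1 : Fin 2) : EucSp 2 →L[ℝ] ℝ).contDiff
  have hCu : ContDiff ℝ 2 u :=
    ((hp0.pow 2).sub (hp1.pow 2)).add (contDiff_const.mul (contDiff_h.comp hp0))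
  have hCv : ContDiff ℝ 2 v := (hp0.pow 2).sub (hp1.pow 2)
  have h4 : ∀ p ∈ ball (0 : EucSp 2) 1, PucciSup 2 lam Lam (Hess 2 u p) = f p := by
    intro p _
    show PucciSup 2 lam Lam
      (Hess 2 (fun p : EucSp 2 => (p 0) ^ 2 - (p 1) ^ 2 + C * max (p 0) 0 ^ 3) p)
      = 2 * (Lam - lam) + 6 * C * Lam * max (p 0) 0
    rw [hess_u C p, pucciSup_diag hlam hLam.le (by positivity) (by norm_num : (0:ℝ) ≤ 2)]
    ring
  have h5 : ∀ p ∈ ball (0 : EucSp 2) 1, PucciInf 2 lam Lam (Hess 2 v p) = g p := by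
    intro p _
    show PucciInf 2 lam Lam (Hess 2 (fun p : EucSp 2 => (p 0) ^ 2 - (p 1) ^ 2) p)
      = -(2 * (Lam - lam))
    rw [hess_v p, pucciInf_diag hlam hLam.le (by norm_num : (0:ℝ) ≤ 2) (by norm_num : (0:ℝ) ≤ 2)]
    ring
  refine ⟨hCu.contDiffOn, hCv.contDiffOn, ?_, h4, h5, fun p hp => (h4 p hp).le,
    fun p hp => (h5 p hp).ge, fun p hp => ⟨h4 p hp.2, h5 p hp.2⟩⟩
  intro p _
  show p 0 ^ 2 - p 1 ^ 2 ≤ p 0 ^ 2 - p 1 ^ 2 + C * max (p 0) 0 ^ 3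
  have h0 : (0:ℝ) ≤ max (p 0) 0 := le_max_right _ _
  have h1 : (0:ℝ) ≤ C * max (p 0) 0 ^ 3 := by positivity
  linarith
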